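/- For every j ≥ 1, the multilinear operator J_j satisfies the norm bound ‖J_j‖ ≤ ν (μ + ν)^{j−1}. -/

import Mathlib

lemma my_sum_finset_pow (m : ℕ) (μ ν : ℝ) :
    ∑ s : Finset (Fin m), ν ^ s.card * μ ^ (m - s.card) = (μ + ν) ^ m := by
  have h := Finset.prod_add (fun _ : Fin m => ν) (fun _ : Fin m => μ) Finset.univ
  simp only [Finset.prod_const, Finset.powerset_univ,
    Finset.card_sdiff_of_subset (Finset.subset_univ _), Finset.card_univ, Fintype.card_fin] at h
  rw [add_comm μ ν, ← h]

lemma my_card_lemma (j : ℕ) (hj : 1 ≤ j) (c : CompositionAsSet j) :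
    (compositionAsSetEquiv j c).card + 2 = c.boundaries.card := by
  classical
  set f : Fin (j - 1) → Fin (j + 1) := fun i => ⟨1 + (i : ℕ), by omega⟩ with hf
  have hinj : Function.Injective f := by
    intro a b hab
    have := congrArg Fin.val hab
    simp only [hf] at this
    exact Fin.ext (by omega)
  have hmem : ∀ i : Fin (j - 1), i ∈ compositionAsSetEquiv j c ↔ f i ∈ c.boundaries := by
    intro i
    simp only [compositionAsSetEquiv, Equiv.coe_fn_mk, Set.mem_toFinset, Set.mem_setOf_eq]
    exact Iff.rfl
  have himg : (compositionAsSetEquiv j c).image f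
      = (c.boundaries.erase (Fin.last j)).erase 0 := by
    ext x
    simp only [Finset.mem_image, Finset.mem_erase]
    constructor
    · rintro ⟨i, hi, rfl⟩
      rw [hmem] at hi
      have hlt : (i : ℕ) < j - 1 := i.isLt
      refine ⟨?_, ?_, hi⟩
      · intro h0
        have := congrArg Fin.val h0
        simp [hf] at this
      · intro hL
        have := congrArg Fin.val hL
        simp only [hf, Fin.val_last] at this
        omega
    · rintro ⟨h0, hL, hx⟩
      have hx0 : (x : ℕ) ≠ 0 := fun h => h0 (Fin.ext (by simp [h]))
      have hxL : (x : ℕ) ≠ j := fun h => hL (Fin.ext (by simp [h]))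
      have hxlt : (x : ℕ) < j + 1 := x.isLt
      refine ⟨⟨(x : ℕ) - 1, by omega⟩, ?_, ?_⟩
      · rw [hmem]
        have : f ⟨(x : ℕ) - 1, by omega⟩ = x := Fin.ext (by simp [hf]; omega)
        rw [this]; exact hx
      · exact Fin.ext (by simp [hf]; omega)
  have hcard : (compositionAsSetEquiv j c).card
      = ((c.boundaries.erase (Fin.last j)).erase 0).card := by
    rw [← himg, Finset.card_image_of_injective _ hinj]
  have hLmem : Fin.last j ∈ c.boundaries := c.getLast_mem
  have h0mem : (0 : Fin (j + 1)) ∈ c.boundaries.erase (Fin.last j) := by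
    refine Finset.mem_erase.2 ⟨?_, c.zero_mem⟩
    intro h
    have := congrArg Fin.val h
    simp [Fin.val_last] at this
    omega
  have h2 : 2 ≤ c.boundaries.card := by
    have hsub : ({0, Fin.last j} : Finset (Fin (j + 1))) ⊆ c.boundaries := by
      intro x hx
      rcases Finset.mem_insert.1 hx with rfl | hx
      · exact c.zero_mem
      · rw [Finset.mem_singleton.1 hx]; exact hLmem
    have hne : (0 : Fin (j + 1)) ≠ Fin.last j := by
      intro h
      have := congrArg Fin.val h
      simp [Fin.val_last] at this
      omega
    calc 2 = ({0, Fin.last j} : Finset (Fin (j + 1))).card := (Finset.card_pair hne).symm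
      _ ≤ c.boundaries.card := Finset.card_le_card hsub
  rw [hcard, Finset.card_erase_of_mem h0mem, Finset.card_erase_of_mem hLmem]
  omega

lemma my_length_eq (j : ℕ) (hj : 1 ≤ j) (c : Composition j) :
    c.length = (compositionAsSetEquiv j c.toCompositionAsSet).card + 1 := by
  have h := my_card_lemma j hj c.toCompositionAsSet
  have h2 := c.toCompositionAsSet.card_boundaries_eq_succ_length
  rw [c.toCompositionAsSet_length] at h2
  omega

lemma my_comp_sum (j : ℕ) (hj : 1 ≤ j) (μ ν : ℝ) :
    ∑ c : Composition j, ν ^ c.length * μ ^ (j - c.length) = ν * (μ + ν) ^ (j - 1) := by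
  rw [← my_sum_finset_pow (j - 1) μ ν, Finset.mul_sum]
  apply Fintype.sum_equiv ((compositionEquiv j).trans (compositionAsSetEquiv j))
  intro c
  have hl := my_length_eq j hj c
  have he : ((compositionEquiv j).trans (compositionAsSetEquiv j)) c
      = compositionAsSetEquiv j c.toCompositionAsSet := rfl
  rw [he, hl, pow_succ]
  have hsub : j - ((compositionAsSetEquiv j c.toCompositionAsSet).card + 1)
      = j - 1 - (compositionAsSetEquiv j c.toCompositionAsSet).card := by omega
  rw [hsub]; ring

/-- Let `X` be a real Banach space and `Y` a commutative Banach
algebra over `ℝ`.  Let `μ, ν ≥ 0` and for each `j ≥ 1` let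
`Ǩ_j : X^j → Y` be a continuous multilinear map with `‖Ǩ_j‖ ≤ ν μ^{j-1}`.
Define `J_j(f₁,…,f_j) = Σ_{m=1}^{j} (1/m) Σ_{i₁+⋯+i_m=j, i_k ≥ 1}
Ǩ_{i₁}(f₁,…,f_{i₁}) ⋯ Ǩ_{i_m}(f_{j-i_m+1},…,f_j)` (the inner sum over
compositions of `j` of length `m`, the product taken in `Y`).  Then
`‖J_j‖ ≤ ν (μ + ν)^{j-1}` for every `j ≥ 1`. -/
theorem stmt5 {X Y : Type*}
    [NormedAddCommGroup X] [NormedSpace ℝ X] [CompleteSpace X]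
    [NormedCommRing Y] [NormedAlgebra ℝ Y] [CompleteSpace Y]
    (μ ν : ℝ) (hμ : 0 ≤ μ) (hν : 0 ≤ ν)
    (K : ∀ j : ℕ, ContinuousMultilinearMap ℝ (fun _ : Fin j => X) Y)
    (hK : ∀ j : ℕ, 1 ≤ j → ‖K j‖ ≤ ν * μ ^ (j - 1))
    (J : ∀ j : ℕ, ContinuousMultilinearMap ℝ (fun _ : Fin j => X) Y)
    (hJ : ∀ (j : ℕ) (f : Fin j → X), J j f =
      ∑ m ∈ Finset.Icc 1 j, (m : ℝ)⁻¹ •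
        ∑ c ∈ Finset.univ.filter (fun c : Composition j => c.length = m),
          ∏ k : Fin c.length, K (c.blocksFun k) (fun i => f (c.embedding k i)))
    (j : ℕ) (hj : 1 ≤ j) :
    ‖J j‖ ≤ ν * (μ + ν) ^ (j - 1) := by
  have hj0 : 0 < j := hj
  refine ContinuousMultilinearMap.opNorm_le_bound (by positivity) fun f => ?_
  rw [hJ]
  set P := ∏ i, ‖f i‖ with hPdef
  have hP : 0 ≤ P := Finset.prod_nonneg fun _ _ => norm_nonneg _
  have hc : ∀ c : Composition j,
      ‖∏ k : Fin c.length, K (c.blocksFun k) (fun i => f (c.embedding k i))‖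
        ≤ ν ^ c.length * μ ^ (j - c.length) * P := by
    intro c
    have hlen : 0 < c.length := c.length_pos_of_pos hj0
    calc ‖∏ k : Fin c.length, K (c.blocksFun k) fun i => f (c.embedding k i)‖
        ≤ ∏ k : Fin c.length, ‖K (c.blocksFun k) fun i => f (c.embedding k i)‖ :=
          Finset.norm_prod_le' _ (Finset.univ_nonempty_iff.2 ⟨⟨0, hlen⟩⟩) _
      _ ≤ ∏ k : Fin c.length,
            (ν * μ ^ (c.blocksFun k - 1) * ∏ i, ‖f (c.embedding k i)‖) := by
          apply Finset.prod_le_prod (fun _ _ => norm_nonneg _)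
          intro k _
          refine le_trans ((K (c.blocksFun k)).le_opNorm _) ?_
          exact mul_le_mul_of_nonneg_right (hK _ (c.one_le_blocksFun k))
            (Finset.prod_nonneg fun _ _ => norm_nonneg _)
      _ = (∏ k : Fin c.length, (ν * μ ^ (c.blocksFun k - 1))) *
            ∏ k : Fin c.length, ∏ i, ‖f (c.embedding k i)‖ := Finset.prod_mul_distrib
      _ = ν ^ c.length * μ ^ (j - c.length) * P := by
          congr 1
          · rw [Finset.prod_mul_distrib, Finset.prod_const, Finset.card_univ, Fintype.card_fin,
              Finset.prod_pow_eq_pow_sum]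
            congr 1
            rw [Finset.sum_tsub_distrib _ (fun k _ => c.one_le_blocksFun k), c.sum_blocksFun]
            simp
          · calc ∏ k : Fin c.length, ∏ i, ‖f (c.embedding k i)‖
                = ∏ x : Σ k : Fin c.length, Fin (c.blocksFun k), ‖f (c.blocksFinEquiv x)‖ := by
                  rw [← Finset.univ_sigma_univ, Finset.prod_sigma]
                  rfl
              _ = P := Equiv.prod_comp c.blocksFinEquiv fun i => ‖f i‖
  calc ‖∑ m ∈ Finset.Icc 1 j, (m : ℝ)⁻¹ •
        ∑ c ∈ Finset.univ.filter (fun c : Composition j => c.length = m),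
          ∏ k : Fin c.length, K (c.blocksFun k) (fun i => f (c.embedding k i))‖
      ≤ ∑ m ∈ Finset.Icc 1 j, ‖(m : ℝ)⁻¹ •
        ∑ c ∈ Finset.univ.filter (fun c : Composition j => c.length = m),
          ∏ k : Fin c.length, K (c.blocksFun k) (fun i => f (c.embedding k i))‖ :=
        norm_sum_le _ _
    _ ≤ ∑ m ∈ Finset.Icc 1 j,
          ∑ c ∈ Finset.univ.filter (fun c : Composition j => c.length = m),
            ν ^ c.length * μ ^ (j - c.length) * P := by
        apply Finset.sum_le_sum
        intro m hm
        have hm1 : (1 : ℝ) ≤ (m : ℝ) := by exact_mod_cast (Finset.mem_Icc.1 hm).1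
        rw [norm_smul, Real.norm_eq_abs, abs_inv, Nat.abs_cast]
        exact le_trans (mul_le_of_le_one_left (norm_nonneg _) (inv_le_one_of_one_le₀ hm1))
          ((norm_sum_le _ _).trans (Finset.sum_le_sum fun c _ => hc c))
    _ = (∑ c : Composition j, ν ^ c.length * μ ^ (j - c.length)) * P := by
        rw [Finset.sum_mul]
        exact Finset.sum_fiberwise_of_maps_to
          (fun (c : Composition j) _ => Finset.mem_Icc.2 ⟨c.length_pos_of_pos hj0, c.length_le⟩)
          (fun (c : Composition j) => ν ^ c.length * μ ^ (j - c.length) * P)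
    _ = ν * (μ + ν) ^ (j - 1) * P := by rw [my_comp_sum j hj μ ν]
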